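/- The cross-ratio system is 3D consistent: given complex numbers f, f₁, f₂, f₃ and parameters α₁, α₂, α₃, define f_{ij} for i≠j by the cross-ratio equations q(f, f_i, f_{ij}, f_j) = α_i/α_j. Then the three values of f_{123} obtained by imposing q(f_i, f_{ij}, f_{123}, f_{ik}) = α_j/α_k on the three faces adjacent to f_{123} all coincide and are given by f_{123} = [(α₁−α₂)f₁f₂ + (α₂−α₃)f₂f₃ + (α₃−α₁)f₃f₁] / [(α₂−α₁)f₃ + (α₃−α₂)f₁ + (α₁−α₃)f₂]. -/

import Mathlib

/-- The complex cross-ratio `q(a,b,c,d) = (a−b)(b−c)⁻¹(c−d)(d−a)⁻¹`. -/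
noncomputable def crossRatio (a b c d : ℂ) : ℂ := (a - b) * (b - c)⁻¹ * (c - d) * (d - a)⁻¹

lemma solve_cr (α β f a b x : ℂ) (hα : α ≠ 0) (hβ : β ≠ 0)
    (hax : a ≠ x) (hfb : f ≠ b) (hab : a ≠ b)
    (h : crossRatio f a x b = α / β) :
    β*(f-a) + α*(b-f) ≠ 0 ∧ x = (β*(f-a)*b + α*a*(b-f)) / (β*(f-a)+α*(b-f)) := by
  unfold crossRatio at h
  have h1 : a - x ≠ 0 := sub_ne_zero_of_ne hax
  have h2 : b - f ≠ 0 := sub_ne_zero_of_ne (Ne.symm hfb)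
  field_simp at h
  have hpoly : β*(f-a)*(x-b) = α*(a-x)*(b-f) := by linear_combination h
  have hD : β*(f-a) + α*(b-f) ≠ 0 := by
    intro hD
    have : α*(b-f)*(a-b) = 0 := by linear_combination (x-b)*hD - hpoly
    rcases mul_eq_zero.1 this with h' | h'
    · rcases mul_eq_zero.1 h' with h'' | h''
      · exact hα h''
      · exact h2 h''
    · exact hab (sub_eq_zero.1 h')
  refine ⟨hD, ?_⟩
  rw [eq_div_iff hD]
  linear_combination hpoly

lemma cr_eq (a b c d p q : ℂ) (h1 : b - c ≠ 0) (h2 : d - a ≠ 0) (hq : q ≠ 0)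
    (h : q*(a-b)*(c-d) = p*(b-c)*(d-a)) : crossRatio a b c d = p/q := by
  unfold crossRatio
  field_simp
  linear_combination h

/-- 3D consistency of the cross-ratio system: the value
`f₁₂₃ = [(α₁−α₂)f₁f₂ + (α₂−α₃)f₂f₃ + (α₃−α₁)f₃f₁] / [(α₂−α₁)f₃ + (α₃−α₂)f₁ + (α₁−α₃)f₂]`
satisfies all three cross-ratio equations on the faces adjacent to it, i.e. the three
values of `f₁₂₃` computed from these faces coincide and are given by this formula. -/
theorem cross_ratio_3D_consistency
    (f f1 f2 f3 f12 f23 f13 F : ℂ) (α1 α2 α3 : ℂ)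
    (hα1 : α1 ≠ 0) (hα2 : α2 ≠ 0) (hα3 : α3 ≠ 0)
    (h12 : crossRatio f f1 f12 f2 = α1 / α2)
    (h23 : crossRatio f f2 f23 f3 = α2 / α3)
    (h13 : crossRatio f f1 f13 f3 = α1 / α3)
    -- genericity: the initial points are pairwise distinct and all the quantities
    -- appearing as denominators are nonzero
    (d1 : f ≠ f1) (d2 : f ≠ f2) (d3 : f ≠ f3)
    (d4 : f1 ≠ f2) (d5 : f1 ≠ f3) (d6 : f2 ≠ f3)
    (g1 : f1 ≠ f12) (g2 : f2 ≠ f12) (g3 : f2 ≠ f23) (g4 : f3 ≠ f23)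
    (g5 : f1 ≠ f13) (g6 : f3 ≠ f13)
    (g7 : f12 ≠ F) (g8 : f13 ≠ F) (g9 : f23 ≠ F)
    (gden : (α2 - α1) * f3 + (α3 - α2) * f1 + (α1 - α3) * f2 ≠ 0)
    (hF : F = ((α1 - α2) * f1 * f2 + (α2 - α3) * f2 * f3 + (α3 - α1) * f3 * f1) /
              ((α2 - α1) * f3 + (α3 - α2) * f1 + (α1 - α3) * f2)) :
    crossRatio f1 f12 F f13 = α2 / α3 ∧
    crossRatio f2 f12 F f23 = α1 / α3 ∧
    crossRatio f3 f13 F f23 = α1 / α2 := by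
  obtain ⟨hD12, e12⟩ := solve_cr α1 α2 f f1 f2 f12 hα1 hα2 g1 d2 d4 h12
  obtain ⟨hD23, e23⟩ := solve_cr α2 α3 f f2 f3 f23 hα2 hα3 g3 d3 d6 h23
  obtain ⟨hD13, e13⟩ := solve_cr α1 α3 f f1 f3 f13 hα1 hα3 g5 d3 d5 h13
  refine ⟨?_, ?_, ?_⟩
  · refine cr_eq _ _ _ _ _ _ (sub_ne_zero_of_ne g7) (sub_ne_zero_of_ne (Ne.symm g5)) hα3 ?_
    rw [e12, e13, hF]
    generalize hG : (α2 - α1) * f3 + (α3 - α2) * f1 + (α1 - α3) * f2 = G at gden ⊢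
    field_simp
    subst hG
    ring
  · refine cr_eq _ _ _ _ _ _ (sub_ne_zero_of_ne g7) (sub_ne_zero_of_ne (Ne.symm g3)) hα3 ?_
    rw [e12, e23, hF]
    generalize hG : (α2 - α1) * f3 + (α3 - α2) * f1 + (α1 - α3) * f2 = G at gden ⊢
    field_simp
    subst hG
    ring
  · refine cr_eq _ _ _ _ _ _ (sub_ne_zero_of_ne g8) (sub_ne_zero_of_ne (Ne.symm g4)) hα2 ?_
    rw [e13, e23, hF]
    generalize hG : (α2 - α1) * f3 + (α3 - α2) * f1 + (α1 - α3) * f2 = G at gden ⊢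
    field_simp
    subst hG
    ring
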